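/- For integers d ≥ 2 and k ≥ 2d, the VC-dimension of the family of polytopes with at most k vertices in ℝ^d is at least d·k/3. -/

import Mathlib

/-- The class of convex hulls of (at most) `k` points in `ℝ^d`. -/
def KVertexPolytopes (d k : ℕ) : Set (Set (Fin d → ℝ)) :=
  {S | ∃ y : Fin k → (Fin d → ℝ), S = convexHull ℝ (Set.range y)}

noncomputable section KVAux

open Finset

/-- basis-like vectors: `gv d j = e_{j+1}`. -/
def gv (d j : ℕ) : Fin d → ℝ := fun t => if (t : ℕ) = j + 1 then 1 else 0

/-- centers on a parabola (height spread on all nonzero coordinates). -/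
def cv (d i : ℕ) : Fin d → ℝ := fun t => if (t : ℕ) = 0 then (i : ℝ) else (i : ℝ) ^ 2

/-- the shattered points. -/
def av (d i j : ℕ) : Fin d → ℝ := cv d i - gv d j

open Classical in
def tauv (sel : ℕ → ℕ → Prop) (i j : ℕ) : ℝ := if sel i j then -1 else -(1/2)

def Nv (D : ℕ) (sel : ℕ → ℕ → Prop) (i : ℕ) : ℝ := -1 - ∑ j ∈ range D, tauv sel i j

def wpt (d D : ℕ) (M : ℝ) (sel : ℕ → ℕ → Prop) (i : ℕ) : Fin d → ℝ :=
  (1 - Nv D sel i / M)⁻¹ • (cv d i + ∑ j ∈ range D, tauv sel i j • gv d j)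

def Fpt (d : ℕ) (M : ℝ) (l : ℕ) : Fin d → ℝ := M • gv d l

def ypt (d D m k : ℕ) (M : ℝ) (sel : ℕ → ℕ → Prop) : Fin k → (Fin d → ℝ) :=
  fun t => if (t : ℕ) < m then wpt d D M sel (t : ℕ) else Fpt d M ((t : ℕ) - m)

lemma tauv_le (sel : ℕ → ℕ → Prop) (i j : ℕ) : tauv sel i j ≤ -(1/2) := by
  unfold tauv; split <;> norm_num

lemma tauv_ge (sel : ℕ → ℕ → Prop) (i j : ℕ) : -1 ≤ tauv sel i j := by
  unfold tauv; split <;> norm_num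

lemma Nv_le (D : ℕ) (sel : ℕ → ℕ → Prop) (i : ℕ) : Nv D sel i ≤ (D : ℝ) - 1 := by
  have h : -(D : ℝ) ≤ ∑ j ∈ range D, tauv sel i j := by
    calc -(D : ℝ) = ∑ _j ∈ range D, (-1 : ℝ) := by simp
    _ ≤ _ := Finset.sum_le_sum fun n _ => tauv_ge sel i n
  unfold Nv; linarith

lemma M_pos (d k : ℕ) (hd : 0 < d) : (0 : ℝ) < 4 * (d : ℝ) * ((k : ℝ) ^ 2 + 1) := by
  have : (0:ℝ) < (d:ℝ) := by exact_mod_cast hd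
  positivity

lemma den_ge (d D k : ℕ) (M : ℝ) (sel : ℕ → ℕ → Prop) (hd : d = D + 1)
    (hM : M = 4 * (d : ℝ) * ((k : ℝ) ^ 2 + 1)) (i : ℕ) :
    (3 : ℝ) / 4 ≤ 1 - Nv D sel i / M := by
  have hM0 : (0:ℝ) < M := hM ▸ M_pos d k (by omega)
  have hd0 : (1:ℝ) ≤ (d:ℝ) := by exact_mod_cast Nat.one_le_iff_ne_zero.mpr (by omega)
  have hDd : (D : ℝ) = (d : ℝ) - 1 := by rw [hd]; push_cast; ring
  have h1 : Nv D sel i ≤ (d : ℝ) := by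
    have h := Nv_le D sel i
    rw [hDd] at h; linarith
  have h2 : Nv D sel i / M ≤ (d : ℝ) / M := by
    exact div_le_div_of_nonneg_right h1 hM0.le
  have h3 : (d : ℝ) / M ≤ 1 / 4 := by
    rw [hM, div_le_iff₀ (M_pos d k (by omega))]
    nlinarith [sq_nonneg (k:ℝ)]
  linarith

lemma kv_incl (d D m k : ℕ) (M : ℝ) (sel : ℕ → ℕ → Prop)
    (hd : d = D + 1) (hmk : m + D = k)
    (hM : M = 4 * (d : ℝ) * ((k : ℝ) ^ 2 + 1))
    (i j : ℕ) (hi : i < m) (hj : j < D) (hs : sel i j) :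
    av d i j ∈ convexHull ℝ (Set.range (ypt d D m k M sel)) := by
  classical
  have hM0 : (0:ℝ) < M := hM ▸ M_pos d k (by omega)
  have hden : (0:ℝ) < 1 - Nv D sel i / M := by
    linarith [den_ge d D k M sel hd hM i]
  set μ : ℕ → ℝ := fun n => -(if n = j then 1 else 0) - tauv sel i n with hμ
  set ω : ℕ → ℝ := fun n => if n = D then 1 - Nv D sel i / M else μ n / M with hω
  set z : ℕ → (Fin d → ℝ) := fun n => if n = D then wpt d D M sel i else Fpt d M n with hz
  have hμ0 : ∀ n ∈ range D, 0 ≤ μ n := by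
    intro n hn
    by_cases h : n = j
    · subst h; simp [hμ, tauv, hs]
    · have := tauv_le sel i n
      simp only [hμ, if_neg h]
      linarith
  have hμsum : ∑ n ∈ range D, μ n = Nv D sel i := by
    rw [hμ]
    rw [Finset.sum_sub_distrib, Finset.sum_neg_distrib]
    rw [Finset.sum_ite_eq' (range D) j (fun _ => (1:ℝ)), if_pos (Finset.mem_range.mpr hj)]
    simp [Nv]
  have hωsum : ∑ n ∈ range (D+1), ω n = 1 := by
    rw [Finset.sum_range_succ]
    have h1 : ∀ n ∈ range D, ω n = μ n / M := by
      intro n hn; simp [hω, (Finset.mem_range.mp hn).ne]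
    rw [Finset.sum_congr rfl h1, ← Finset.sum_div, hμsum]
    simp only [hω, if_pos rfl]
    field_simp
    ring
  have hω0 : ∀ n ∈ range (D+1), 0 ≤ ω n := by
    intro n hn
    by_cases h : n = D
    · simp only [hω, if_pos h]; linarith
    · have hnD : n ∈ range D := Finset.mem_range.mpr (by
        have := Finset.mem_range.mp hn; omega)
      simp only [hω, if_neg h]
      exact div_nonneg (hμ0 n hnD) hM0.le
  have hzmem : ∀ n ∈ range (D+1), z n ∈ Set.range (ypt d D m k M sel) := by
    intro n hn
    by_cases h : n = D
    · refine ⟨⟨i, by omega⟩, ?_⟩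
      simp only [ypt, hz, if_pos h]
      simp [hi]
    · have hnD : n < D := by have := Finset.mem_range.mp hn; omega
      refine ⟨⟨m + n, by omega⟩, ?_⟩
      simp only [ypt, hz, if_neg h]
      simp
  have hcm : (range (D+1)).centerMass ω z = av d i j := by
    rw [Finset.centerMass_eq_of_sum_1 _ _ hωsum]
    rw [Finset.sum_range_succ]
    have h1 : ∀ n ∈ range D, ω n • z n = μ n • gv d n := by
      intro n hn
      have hne := (Finset.mem_range.mp hn).ne
      simp only [hω, hz, if_neg hne, Fpt]
      rw [smul_smul]
      congr 1
      field_simp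
    rw [Finset.sum_congr rfl h1]
    simp only [hω, hz, if_pos rfl, wpt]
    rw [smul_inv_smul₀ (ne_of_gt hden)]
    have hcomb : ∑ x ∈ range D, μ x • gv d x + (cv d i + ∑ n ∈ range D, tauv sel i n • gv d n)
        = cv d i + ∑ n ∈ range D, (tauv sel i n • gv d n + μ n • gv d n) := by
      rw [Finset.sum_add_distrib]; abel
    rw [hcomb]
    have h2 : ∀ n ∈ range D, tauv sel i n • gv d n + μ n • gv d n
        = (if n = j then -(1:ℝ) else 0) • gv d n := by
      intro n hn
      rw [← add_smul]
      congr 1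
      simp only [hμ]
      split <;> ring
    rw [Finset.sum_congr rfl h2]
    have h3 : ∑ n ∈ range D, (if n = j then -(1:ℝ) else 0) • gv d n = -gv d j := by
      have h4 : ∀ n ∈ range D, (if n = j then -(1:ℝ) else 0) • gv d n
          = (if n = j then -gv d n else 0) := by
        intro n hn; split <;> simp
      rw [Finset.sum_congr rfl h4]
      rw [Finset.sum_ite_eq' (range D) j (fun n => -gv d n), if_pos (Finset.mem_range.mpr hj)]
    rw [h3, av]
    abel
  rw [← hcm]
  exact Finset.centerMass_mem_convexHull _ hω0 (by rw [hωsum]; norm_num) hzmem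

set_option maxHeartbeats 1200000 in
lemma kv_excl (d D m k : ℕ) (M : ℝ) (sel : ℕ → ℕ → Prop)
    (hd : d = D + 1) (hmk : m + D = k) (hmkk : m ≤ k)
    (hM : M = 4 * (d : ℝ) * ((k : ℝ) ^ 2 + 1))
    (i j : ℕ) (hi : i < m) (hj : j < D) (hs : ¬ sel i j) :
    av d i j ∉ convexHull ℝ (Set.range (ypt d D m k M sel)) := by
  classical
  intro hmem
  have hM0 : (0:ℝ) < M := hM ▸ M_pos d k (by omega)
  have hjd : j + 1 < d := by omega
  set jj : Fin d := ⟨j + 1, hjd⟩ with hjj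
  set z0 : Fin d := ⟨0, by omega⟩ with hz0
  set f : (Fin d → ℝ) → ℝ := fun x => 2 * (i : ℝ) * x z0 - x jj with hf
  have hlin : IsLinearMap ℝ f := by
    constructor
    · intro x y; simp only [hf, Pi.add_apply]; ring
    · intro c x; simp only [hf, Pi.smul_apply, smul_eq_mul]; ring
  -- value at the excluded point
  have hval : f (av d i j) = (i : ℝ) ^ 2 + 1 := by
    simp only [hf, av, cv, gv, Pi.sub_apply, hjj, hz0]
    norm_num
    ring
  -- every generator lies in the halfspace f ≤ i² + 3/4
  have hgen : ∀ t : Fin k, f (ypt d D m k M sel t) ≤ (i : ℝ) ^ 2 + 3 / 4 := by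
    intro t
    have hik : (i : ℝ) ^ 2 + 3 / 4 ≤ (k : ℝ) ^ 2 + 1 := by
      have : (i : ℝ) ≤ (k : ℝ) := by exact_mod_cast (by omega : i ≤ k)
      have hi0 : (0:ℝ) ≤ (i:ℝ) := by positivity
      nlinarith
    simp only [ypt]
    split_ifs with ht
    · -- a witness vertex w_{i'}
      set i' : ℕ := (t : ℕ) with hi'
      set N' : ℝ := Nv D sel i' with hN'
      have hden : (3:ℝ)/4 ≤ 1 - N' / M := den_ge d D k M sel hd hM i'
      have hdpos : (0:ℝ) < 1 - N' / M := by linarith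
      -- compute f (wpt …)
      have hwv : f (wpt d D M sel i') =
          (1 - N' / M)⁻¹ * (2 * (i:ℝ) * (i':ℝ) - ((i':ℝ)^2 + tauv sel i' j)) := by
        have e0 : (cv d i' + ∑ n ∈ range D, tauv sel i' n • gv d n) z0 = (i' : ℝ) := by
          simp only [Pi.add_apply, Finset.sum_apply, Pi.smul_apply, smul_eq_mul, cv, gv, hz0]
          simp
        have e1 : (cv d i' + ∑ n ∈ range D, tauv sel i' n • gv d n) jj
            = (i' : ℝ)^2 + tauv sel i' j := by
          simp only [Pi.add_apply, Finset.sum_apply, Pi.smul_apply, smul_eq_mul, cv, gv, hjj]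
          have : ∀ n ∈ range D, tauv sel i' n * (if j + 1 = n + 1 then (1:ℝ) else 0)
              = (if n = j then tauv sel i' n else 0) := by
            intro n hn
            by_cases h : n = j
            · subst h; simp
            · rw [if_neg (show ¬ j + 1 = n + 1 by omega), mul_zero, if_neg h]
          rw [Finset.sum_congr rfl this,
            Finset.sum_ite_eq' (range D) j (fun n => tauv sel i' n),
            if_pos (Finset.mem_range.mpr hj)]
          norm_num
        simp only [hf, wpt, Pi.smul_apply, smul_eq_mul, ← hN']
        rw [e0, e1]
        ring
      -- bound N' * (i²+3/4) ≤ M/4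
      have hN'le : N' ≤ (d : ℝ) := by
        have h := Nv_le D sel i'
        have hDd : (D : ℝ) = (d : ℝ) - 1 := by rw [hd]; push_cast; ring
        rw [hDd] at h; rw [hN']; linarith
      have htauj : -1 ≤ tauv sel i' j ∧ (i' = i → tauv sel i' j = -(1/2)) :=
        ⟨tauv_ge sel i' j, fun h => by rw [h]; simp [tauv, hs]⟩
      clear_value N'
      generalize htv : tauv sel i' j = tv at htauj hwv
      clear_value i'
      have hkey : N' * ((i : ℝ) ^ 2 + 3 / 4) ≤ M / 4 := by
        have hc0 : (0:ℝ) < (i : ℝ) ^ 2 + 3 / 4 := by positivity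
        rcases le_or_gt N' 0 with h | h
        · nlinarith
        · calc N' * ((i : ℝ) ^ 2 + 3 / 4) ≤ (d:ℝ) * ((i : ℝ) ^ 2 + 3 / 4) :=
              mul_le_mul_of_nonneg_right hN'le hc0.le
            _ ≤ (d:ℝ) * ((k : ℝ) ^ 2 + 1) := by
              have hd0 : (0:ℝ) ≤ (d:ℝ) := by positivity
              exact mul_le_mul_of_nonneg_left hik hd0
            _ = M / 4 := by rw [hM]; ring
      -- main estimate
      have hE : 2 * (i:ℝ) * (i':ℝ) - ((i':ℝ)^2 + tv)
          ≤ ((i : ℝ)^2 + 3/4) * (1 - N' / M) := by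
        have hexp : ((i : ℝ)^2 + 3/4) * (1 - N' / M)
            = (i : ℝ)^2 + 3/4 - N' * ((i : ℝ)^2 + 3/4) / M := by ring
        have hdiv : N' * ((i : ℝ)^2 + 3/4) / M ≤ 1/4 := by
          rw [div_le_iff₀ hM0]; linarith
        rcases eq_or_ne i' i with h | h
        · have := htauj.2 h
          rw [this, h, hexp]; linarith
        · have hsq : (1:ℝ) ≤ ((i:ℝ) - (i':ℝ))^2 := by
            have : (i:ℕ) ≠ i' := fun hh => h (hh ▸ rfl)
            rcases lt_or_gt_of_ne this with hlt | hlt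
            · have : (i:ℝ) + 1 ≤ (i':ℝ) := by exact_mod_cast hlt
              nlinarith
            · have : (i':ℝ) + 1 ≤ (i:ℝ) := by exact_mod_cast hlt
              nlinarith
          have htau : -1 ≤ tv := htauj.1
          rw [hexp]; nlinarith
      rw [hwv]
      calc (1 - N' / M)⁻¹ * (2 * (i:ℝ) * (i':ℝ) - ((i':ℝ)^2 + tv))
          ≤ (1 - N' / M)⁻¹ * (((i : ℝ)^2 + 3/4) * (1 - N' / M)) :=
            mul_le_mul_of_nonneg_left hE (inv_nonneg.mpr hdpos.le)
        _ = (i : ℝ)^2 + 3/4 := by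
            rw [mul_comm ((i : ℝ)^2 + 3/4), inv_mul_cancel_left₀ (ne_of_gt hdpos)]
    · -- a far point F_l
      set l : ℕ := (t : ℕ) - m
      have : f (Fpt d M l) = -(M * (if j + 1 = l + 1 then (1:ℝ) else 0)) := by
        simp only [hf, Fpt, Pi.smul_apply, smul_eq_mul, gv, hjj, hz0]
        simp
      rw [this]
      have hi0 : (0:ℝ) ≤ (i:ℝ)^2 := by positivity
      split_ifs <;> nlinarith
  have hsub : Set.range (ypt d D m k M sel) ⊆ {x | f x ≤ (i : ℝ) ^ 2 + 3 / 4} := by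
    rintro _ ⟨t, rfl⟩; exact hgen t
  have hle := convexHull_min hsub (convex_halfSpace_le hlin _) hmem
  rw [Set.mem_setOf_eq, hval] at hle
  linarith

end KVAux

/-- Lower bound: for `d ≥ 2` and `k ≥ 2d`, the VC-dimension of `k`-vertex polytopes in
`ℝ^d` is at least `d·k/3`: there is a shattered finite set `A` with `3·|A| ≥ d·k`. -/
theorem kvertex_polytopes_vc_lower (d k : ℕ) (hd : 2 ≤ d) (hk : 2 * d ≤ k) :
    ∃ A : Finset (Fin d → ℝ),
      d * k ≤ 3 * A.card ∧
      ∀ B : Finset (Fin d → ℝ), B ⊆ A →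
        ∃ S ∈ KVertexPolytopes d k, S ∩ (A : Set (Fin d → ℝ)) = (B : Set (Fin d → ℝ)) := by
  classical
  obtain ⟨D, hdD⟩ : ∃ D, d = D + 1 := ⟨d - 1, by omega⟩
  set m : ℕ := k - d + 1 with hm
  have hmk : m + D = k := by omega
  have hD : 0 < D := by omega
  have hm0 : 0 < m := by omega
  set M : ℝ := 4 * (d : ℝ) * ((k : ℝ) ^ 2 + 1) with hMdef
  have hav_inj : Function.Injective (fun p : Fin m × Fin D => av d (p.1 : ℕ) (p.2 : ℕ)) := by
    intro p q hpq
    have hpq' : av d (p.1 : ℕ) (p.2 : ℕ) = av d (q.1 : ℕ) (q.2 : ℕ) := hpq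
    have hjd : (p.2 : ℕ) + 1 < d := by omega
    have e : ∀ (r s : ℕ), av d r s ⟨(p.2 : ℕ) + 1, hjd⟩
        = (r : ℝ) ^ 2 - (if (p.2 : ℕ) + 1 = s + 1 then 1 else 0) := by
      intro r s
      simp only [av, cv, gv, Pi.sub_apply]
      rw [if_neg (Nat.succ_ne_zero _)]
    have h0 : av d (p.1 : ℕ) (p.2 : ℕ) ⟨0, by omega⟩
        = av d (q.1 : ℕ) (q.2 : ℕ) ⟨0, by omega⟩ := congrFun hpq' _
    have hii : ((p.1 : ℕ) : ℝ) = ((q.1 : ℕ) : ℝ) := by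
      simpa [av, cv, gv] using h0
    have hih : (p.1 : ℕ) = (q.1 : ℕ) := by exact_mod_cast hii
    have h1 : av d (p.1 : ℕ) (p.2 : ℕ) ⟨(p.2 : ℕ) + 1, hjd⟩
        = av d (q.1 : ℕ) (q.2 : ℕ) ⟨(p.2 : ℕ) + 1, hjd⟩ := congrFun hpq' _
    rw [e, e, hih] at h1
    have hjj : (p.2 : ℕ) = (q.2 : ℕ) := by
      by_contra hne
      rw [if_pos rfl, if_neg (by omega : ¬ (p.2 : ℕ) + 1 = (q.2 : ℕ) + 1)] at h1
      norm_num at h1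
    exact Prod.ext (Fin.ext hih) (Fin.ext hjj)
  refine ⟨(Finset.univ : Finset (Fin m × Fin D)).image
      (fun p => av d (p.1 : ℕ) (p.2 : ℕ)), ?_, ?_⟩
  · rw [Finset.card_image_of_injective _ hav_inj, Finset.card_univ, Fintype.card_prod,
      Fintype.card_fin, Fintype.card_fin]
    obtain ⟨b, hb⟩ : ∃ b, k = 2 * d + b := ⟨k - 2 * d, by omega⟩
    obtain ⟨a, ha⟩ : ∃ a, d = a + 2 := ⟨d - 2, by omega⟩
    have hmval : m = a + b + 3 := by omega
    have hDval : D = a + 1 := by omega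
    rw [hmval, hDval, ha, hb]
    nlinarith [Nat.zero_le a, Nat.zero_le b, Nat.zero_le (a * b)]
  · intro B hB
    set sel : ℕ → ℕ → Prop := fun i j => av d i j ∈ B with hsel
    refine ⟨convexHull ℝ (Set.range (ypt d D m k M sel)),
      ⟨ypt d D m k M sel, rfl⟩, ?_⟩
    ext x
    simp only [Set.mem_inter_iff, Finset.coe_image, Set.mem_image, Finset.mem_coe,
      Finset.coe_univ, Set.image_univ, Set.mem_range]
    constructor
    · rintro ⟨hxS, p, rfl⟩
      by_cases hsp : sel (p.1 : ℕ) (p.2 : ℕ)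
      · exact hsp
      · exact absurd hxS (kv_excl d D m k M sel hdD hmk (by omega) rfl
          (p.1 : ℕ) (p.2 : ℕ) p.1.isLt p.2.isLt hsp)
    · intro hxB
      have hxA := hB hxB
      simp only [Finset.mem_image, Finset.mem_univ, true_and] at hxA
      obtain ⟨p, hp⟩ := hxA
      subst hp
      refine ⟨kv_incl d D m k M sel hdD hmk rfl
        (p.1 : ℕ) (p.2 : ℕ) p.1.isLt p.2.isLt hxB, ⟨p, rfl⟩⟩
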